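/- In the d-station tandem setting with τ_i = 2b_i/(c_0+c_i) where b = -R⁻¹μ, b_i = β_i - β_0: the two symmetry conditions τ_i = (2b_i + c_iτ_j - c_0τ_j)/(c_0 + c_i) and τ_j = (2c_iτ_i + 2b_j - 2b_i)/(c_i + c_j) hold simultaneously for all 1 ≤ i < j ≤ d if and only if c_0 = c_i for all i = 1, …, d-1. -/

import Mathlib

open Matrix

theorem tandem_product_form_iff_equal_variability {d : ℕ}
    (c β : Fin (d + 1) → ℝ)
    (hc : ∀ k, 0 < c k) (hβ : ∀ i : Fin d, β 0 < β i.succ)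
    (b : Fin d → ℝ) (hb : ∀ i, b i = β i.succ - β 0)
    (τ : Fin d → ℝ) (hτ : ∀ i, τ i = 2 * b i / (c 0 + c i.succ)) :
    (∀ i j : Fin d, i < j →
        τ i = (2 * b i + c i.succ * τ j - c 0 * τ j) / (c 0 + c i.succ) ∧
        τ j = (2 * c i.succ * τ i + 2 * b j - 2 * b i) / (c i.succ + c j.succ))
    ↔ (∀ i : Fin d, (i : ℕ) < d - 1 → c 0 = c i.succ) := by
  have hbpos : ∀ i : Fin d, 0 < b i := fun i => by
    rw [hb]; linarith [hβ i]
  have hcsum : ∀ i : Fin d, 0 < c 0 + c i.succ := fun i =>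
    add_pos (hc 0) (hc i.succ)
  have hτpos : ∀ i : Fin d, 0 < τ i := fun i => by
    rw [hτ]; exact div_pos (by linarith [hbpos i]) (hcsum i)
  constructor
  · intro h i hi
    have hj : (i : ℕ) + 1 < d := by omega
    set j : Fin d := ⟨(i : ℕ) + 1, hj⟩ with hjdef
    have hij : i < j := by
      simp [Fin.lt_def, hjdef]
    obtain ⟨h1, _⟩ := h i j hij
    rw [hτ i, eq_div_iff (hcsum i).ne'] at h1
    rw [div_mul_cancel₀ _ (hcsum i).ne'] at h1
    have h2 : c 0 * τ j = c i.succ * τ j := by linarith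
    exact mul_right_cancel₀ (hτpos j).ne' h2
  · intro h i j hij
    have hc0 : c 0 = c i.succ := h i (by omega)
    have hne1 := (hcsum i).ne'
    have hne2 := (hcsum j).ne'
    have hne3 : c i.succ + c j.succ ≠ 0 := by
      have := hc i.succ; have := hc j.succ; positivity
    constructor
    · rw [hτ i, hτ j, ← hc0]
      field_simp
      ring
    · rw [hτ i, hτ j, ← hc0]
      rw [← hc0] at hne1
      field_simp
      rw [show 2 * c 0 * b i / c 0 = 2 * b i by rw [mul_right_comm, mul_div_cancel_right₀ _ (hc 0).ne']]
      ring
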